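/- Let m and n be distinct squarefree integers, both different from 1, let A = ℤ[√m, √n] ⊆ ℂ, and let σ and τ be two distinct ring endomorphisms of A. Let D : A → A be a nonzero (σ,τ)-derivation with D(√m) = 0. Then D is inner if and only if there exists β ∈ A such that D(√n) = 2√n · β (equivalently, D(√n)/(2√n) ∈ A). -/

import Mathlib

set_option maxHeartbeats 1600000 in
set_option synthInstance.maxHeartbeats 400000 in
/-- Let `m`, `n` be distinct squarefree integers, both different from `1`, let
`A = ℤ[√m, √n] ⊆ ℂ`, and let `σ`, `τ` be two distinct ring endomorphisms of `A`.  Let `D` be a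
nonzero `(σ,τ)`-derivation with `D √m = 0`.  Then `D` is inner if and only if there exists
`β ∈ A` with `D √n = 2 √n β` (i.e. `D √n / (2 √n) ∈ A`). -/
theorem stmt18 (m n : ℤ) (hm : Squarefree m) (hn : Squarefree n)
    (hm1 : m ≠ 1) (hn1 : n ≠ 1) (hmn : m ≠ n)
    (sm sn : ℂ) (hsm : sm ^ 2 = (m : ℂ)) (hsn : sn ^ 2 = (n : ℂ))
    (a b : Algebra.adjoin ℤ ({sm, sn} : Set ℂ)) (ha : (a : ℂ) = sm) (hb : (b : ℂ) = sn)
    (σ τ : Algebra.adjoin ℤ ({sm, sn} : Set ℂ) →+* Algebra.adjoin ℤ ({sm, sn} : Set ℂ))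
    (hστ : σ ≠ τ)
    (D : Algebra.adjoin ℤ ({sm, sn} : Set ℂ) →ₗ[ℤ] Algebra.adjoin ℤ ({sm, sn} : Set ℂ))
    (hD : ∀ x y, D (x * y) = D x * τ y + σ x * D y)
    (hD0 : D ≠ 0) (hDa : D a = 0) :
    (∃ β, ∀ x, D x = β * (τ x - σ x)) ↔ (∃ β, D b = 2 * b * β) := by
  -- zero divisors
  have hzd : ∀ x y : Algebra.adjoin ℤ ({sm, sn} : Set ℂ), x * y = 0 → x = 0 ∨ y = 0 := by
    intro x y h
    have h' : (x : ℂ) * (y : ℂ) = 0 := by exact_mod_cast congrArg Subtype.val h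
    rcases mul_eq_zero.mp h' with h'' | h''
    · exact Or.inl (Subtype.ext (by simpa using h''))
    · exact Or.inr (Subtype.ext (by simpa using h''))
  -- squares of generators
  have haa : a * a = ((m : ℤ) : Algebra.adjoin ℤ ({sm, sn} : Set ℂ)) := by
    apply Subtype.ext
    push_cast [ha]
    linear_combination hsm
  have hbb : b * b = ((n : ℤ) : Algebra.adjoin ℤ ({sm, sn} : Set ℂ)) := by
    apply Subtype.ext
    push_cast [hb]
    linear_combination hsn
  have haab : a * (a * b) = ((m : ℤ) : Algebra.adjoin ℤ ({sm, sn} : Set ℂ)) * b := by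
    apply Subtype.ext
    push_cast [ha, hb]
    linear_combination sn * hsm
  have hbab : b * (a * b) = ((n : ℤ) : Algebra.adjoin ℤ ({sm, sn} : Set ℂ)) * a := by
    apply Subtype.ext
    push_cast [ha, hb]
    linear_combination sm * hsn
  have habab : (a * b) * (a * b) = ((m * n : ℤ) : Algebra.adjoin ℤ ({sm, sn} : Set ℂ)) := by
    apply Subtype.ext
    push_cast [ha, hb]
    linear_combination sn ^ 2 * hsm + (m : ℂ) * hsn
  -- endomorphisms send square roots to ± themselves
  have hpm : ∀ (f : Algebra.adjoin ℤ ({sm, sn} : Set ℂ) →+* Algebra.adjoin ℤ ({sm, sn} : Set ℂ))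
      (x : Algebra.adjoin ℤ ({sm, sn} : Set ℂ)) (c : ℤ),
      x * x = ((c : ℤ) : Algebra.adjoin ℤ ({sm, sn} : Set ℂ)) → f x = x ∨ f x = -x := by
    intro f x c hx
    have h1 : f x * f x = x * x := by rw [← map_mul, hx, map_intCast]
    rcases hzd _ _ (show (f x - x) * (f x + x) = 0 by linear_combination h1) with h | h
    · exact Or.inl (by linear_combination h)
    · exact Or.inr (by linear_combination h)
  -- the spanning module
  set M : Submodule ℤ (Algebra.adjoin ℤ ({sm, sn} : Set ℂ)) :=
    Submodule.span ℤ ({1, a, b, a * b} : Set (Algebra.adjoin ℤ ({sm, sn} : Set ℂ))) with hMdef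
  have h1M : (1 : Algebra.adjoin ℤ ({sm, sn} : Set ℂ)) ∈ M := Submodule.subset_span (by simp)
  have haM : a ∈ M := Submodule.subset_span (by simp)
  have hbM : b ∈ M := Submodule.subset_span (by simp)
  have habM : a * b ∈ M := Submodule.subset_span (by simp)
  have hintM : ∀ (c : ℤ) (x : Algebra.adjoin ℤ ({sm, sn} : Set ℂ)), x ∈ M →
      ((c : ℤ) : Algebra.adjoin ℤ ({sm, sn} : Set ℂ)) * x ∈ M := by
    intro c x hx
    have := M.smul_mem c hx
    rwa [zsmul_eq_mul] at this
  have hgmul : ∀ g ∈ ({1, a, b, a * b} : Set (Algebra.adjoin ℤ ({sm, sn} : Set ℂ))),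
      ∀ g' ∈ ({1, a, b, a * b} : Set (Algebra.adjoin ℤ ({sm, sn} : Set ℂ))),
      g * g' ∈ M := by
    intro g hg g' hg'
    simp only [Set.mem_insert_iff, Set.mem_singleton_iff] at hg hg'
    rcases hg with rfl | rfl | rfl | rfl <;> rcases hg' with rfl | rfl | rfl | rfl
    · simpa using h1M
    · simpa using haM
    · simpa using hbM
    · simpa using habM
    · simpa using haM
    · rw [haa]; simpa using hintM m 1 h1M
    · exact habM
    · rw [haab]; exact hintM m b hbM
    · simpa using hbM
    · rw [mul_comm]; exact habM
    · rw [hbb]; simpa using hintM n 1 h1M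
    · rw [hbab]; exact hintM n a haM
    · simpa using habM
    · rw [mul_comm, haab]; exact hintM m b hbM
    · rw [mul_comm, hbab]; exact hintM n a haM
    · rw [habab]; simpa using hintM (m * n) 1 h1M
  have hmul : ∀ x ∈ M, ∀ y ∈ M, x * y ∈ M := by
    intro x hx
    induction hx using Submodule.span_induction with
    | mem g hg =>
      intro y hy
      induction hy using Submodule.span_induction with
      | mem g' hg' => exact hgmul g hg g' hg'
      | zero => simpa using M.zero_mem
      | add u v hu hv h1 h2 => rw [mul_add]; exact M.add_mem h1 h2
      | smul c u hu h1 => rw [mul_smul_comm]; exact M.smul_mem c h1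
    | zero => intro y hy; simpa using M.zero_mem
    | add u v hu hv h1 h2 => intro y hy; rw [add_mul]; exact M.add_mem (h1 y hy) (h2 y hy)
    | smul c u hu h1 => intro y hy; rw [smul_mul_assoc]; exact M.smul_mem c (h1 y hy)
  have hMtop : ∀ x : Algebra.adjoin ℤ ({sm, sn} : Set ℂ), x ∈ M := by
    intro x
    obtain ⟨x, hx⟩ := x
    induction hx using Algebra.adjoin_induction with
    | mem w hw =>
      rcases (by simpa using hw : w = sm ∨ w = sn) with h | h
      · exact (Subtype.ext (ha.trans h.symm) :
          a = (⟨w, Algebra.subset_adjoin hw⟩ : Algebra.adjoin ℤ ({sm, sn} : Set ℂ))) ▸ haM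
      · exact (Subtype.ext (hb.trans h.symm) :
          b = (⟨w, Algebra.subset_adjoin hw⟩ : Algebra.adjoin ℤ ({sm, sn} : Set ℂ))) ▸ hbM
    | algebraMap r =>
      change algebraMap ℤ (Algebra.adjoin ℤ ({sm, sn} : Set ℂ)) r ∈ M
      have h : (algebraMap ℤ _ r) =
          ((r : ℤ) : Algebra.adjoin ℤ ({sm, sn} : Set ℂ)) * 1 := by
        rw [mul_one]; simp [algebraMap_int_eq]
      rw [h]; exact hintM r 1 h1M
    | add x y hx hy h1 h2 => exact M.add_mem h1 h2
    | mul x y hx hy h1 h2 => exact hmul _ h1 _ h2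
  -- D kills 1
  have hD1 : D (1 : Algebra.adjoin ℤ ({sm, sn} : Set ℂ)) = 0 := by
    have h := hD 1 1
    rw [one_mul, map_one τ, map_one σ, mul_one, one_mul] at h
    exact (left_eq_add.mp h)
  -- key: checking innerness on generators suffices
  have hinner : ∀ β' : Algebra.adjoin ℤ ({sm, sn} : Set ℂ), σ a = τ a →
      D b = β' * (τ b - σ b) → ∀ x, D x = β' * (τ x - σ x) := by
    intro β' hab hBb x
    have hx := hMtop x
    induction hx using Submodule.span_induction with
    | mem g hg =>
      simp only [Set.mem_insert_iff, Set.mem_singleton_iff] at hg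
      rcases hg with rfl | rfl | rfl | rfl
      · rw [hD1, map_one τ, map_one σ]; ring
      · rw [hDa, hab]; ring
      · exact hBb
      · rw [hD a b, hDa, hBb, map_mul, map_mul, hab]; ring
    | zero => simp
    | add u v hu hv h1 h2 => rw [map_add, map_add, map_add, h1, h2]; ring
    | smul c u hu h1 =>
      rw [map_smul, map_zsmul σ, map_zsmul τ, h1, ← smul_sub, mul_smul_comm]
  -- two endomorphisms agreeing on generators are equal
  have hfext : σ a = τ a → σ b = τ b → σ = τ := by
    intro h1 h2
    refine RingHom.ext fun x => ?_
    have hx := hMtop x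
    induction hx using Submodule.span_induction with
    | mem g hg =>
      simp only [Set.mem_insert_iff, Set.mem_singleton_iff] at hg
      rcases hg with rfl | rfl | rfl | rfl
      · rw [map_one σ, map_one τ]
      · exact h1
      · exact h2
      · rw [map_mul, map_mul, h1, h2]
    | zero => simp
    | add u v hu hv g1 g2 => rw [map_add, map_add, g1, g2]
    | smul c u hu g1 => rw [map_zsmul σ, map_zsmul τ, g1]
  -- if D b = 0 then D = 0
  have hDzero : D b = 0 → False := by
    intro h0
    apply hD0
    refine LinearMap.ext fun x => ?_
    rw [LinearMap.zero_apply]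
    have hx := hMtop x
    induction hx using Submodule.span_induction with
    | mem g hg =>
      simp only [Set.mem_insert_iff, Set.mem_singleton_iff] at hg
      rcases hg with rfl | rfl | rfl | rfl
      · exact hD1
      · exact hDa
      · exact h0
      · rw [hD a b, hDa, h0]; ring
    | zero => simp
    | add u v hu hv g1 g2 => rw [map_add, g1, g2, add_zero]
    | smul c u hu g1 => rw [map_smul, g1, smul_zero]
  constructor
  · rintro ⟨β, hβ⟩
    rcases hpm σ b n hbb with h1 | h1 <;> rcases hpm τ b n hbb with h2 | h2
    · exact ⟨0, by rw [hβ b, h1, h2]; ring⟩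
    · exact ⟨-β, by rw [hβ b, h1, h2]; ring⟩
    · exact ⟨β, by rw [hβ b, h1, h2]; ring⟩
    · exact ⟨0, by rw [hβ b, h1, h2]; ring⟩
  · rintro ⟨β, hβ⟩
    have hDbne : D b ≠ 0 := fun h => hDzero h
    have haστ : σ a = τ a := by
      by_contra hne
      apply hDbne
      have hc : D (a * b) = D (b * a) := by rw [mul_comm]
      rw [hD, hD, hDa] at hc
      have hz : (σ a - τ a) * D b = 0 := by linear_combination hc
      rcases hzd _ _ hz with h | h
      · exact absurd (by linear_combination h) hne
      · exact h
    have hbστ : σ b ≠ τ b := fun h => hστ (hfext haστ h)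
    rcases hpm σ b n hbb with h1 | h1 <;> rcases hpm τ b n hbb with h2 | h2
    · exact absurd (h1.trans h2.symm) hbστ
    · exact ⟨-β, hinner (-β) haστ (by rw [hβ, h1, h2]; ring)⟩
    · exact ⟨β, hinner β haστ (by rw [hβ, h1, h2]; ring)⟩
    · exact absurd (h1.trans h2.symm) hbστ
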